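/- If r(x) = p(x)/p(−x) approximates e^{x} to order n at 0 (i.e., p(x) − e^x p(−x) = O(x^{n+1})) with p having real coefficients, then the real part of r(ix) approximates cos(x) to order n and the imaginary part approximates sin(x) to order n, for real x near 0. -/

import Mathlib

open Polynomial Filter Asymptotics

lemma coeff_vanish_of_isBigO_real {F : ℂ → ℂ} {ps : FormalMultilinearSeries ℂ ℂ ℂ}
    (hps : HasFPowerSeriesAt F ps 0) {n : ℕ}
    (hreal : (fun x : ℝ => F x) =O[nhds 0] fun x : ℝ => x ^ (n + 1)) :
    ∀ k ≤ n, ps.coeff k = 0 := by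
  intro k
  induction k using Nat.strong_induction_on with
  | _ k ih =>
    intro hk
    have psum : ps.partialSum (k + 1) = fun y : ℂ => y ^ k • ps.coeff k := by
      funext z
      rw [FormalMultilinearSeries.partialSum, Finset.sum_eq_single k]
      · rw [ps.apply_eq_pow_smul_coeff]
      · intro b hb hnb
        have hb' : b < k := (Finset.mem_range_succ_iff.mp hb).lt_of_ne hnb
        rw [ps.apply_eq_pow_smul_coeff, ih b hb' (hb'.le.trans hk), smul_zero]
      · intro hn; exact absurd (Finset.self_mem_range_succ k) hn
    have hO := hps.isBigO_sub_partialSum_pow (k + 1)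
    simp only [zero_add, psum] at hO
    have hcoe : Tendsto (fun x : ℝ => (x : ℂ)) (nhds 0) (nhds 0) := by
      simpa using Complex.continuous_ofReal.tendsto 0
    have hO' : (fun x : ℝ => F x - (x : ℂ) ^ k • ps.coeff k)
        =O[nhds 0] fun x : ℝ => x ^ (k + 1) := by
      refine (hO.comp_tendsto hcoe).trans (isBigO_of_le _ fun x => ?_)
      simp [abs_pow]
    have hxk : (fun x : ℝ => x ^ (n + 1)) =O[nhds 0] fun x : ℝ => x ^ (k + 1) := by
      refine IsBigO.of_bound 1 ?_
      filter_upwards [eventually_abs_sub_lt 0 one_pos] with x hx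
      simp only [sub_zero] at hx
      rw [one_mul, Real.norm_eq_abs, Real.norm_eq_abs, abs_pow, abs_pow]
      exact pow_le_pow_of_le_one (abs_nonneg x) hx.le (by omega)
    have htot : (fun x : ℝ => (x : ℂ) ^ k • ps.coeff k) =O[nhds 0]
        fun x : ℝ => x ^ (k + 1) := by
      have := (hreal.trans hxk).sub hO'
      simpa using this
    obtain ⟨C, hC⟩ := isBigO_iff.mp htot
    have hev : ∀ᶠ x : ℝ in nhdsWithin 0 {0}ᶜ, ‖ps.coeff k‖ ≤ C * |x| := by
      filter_upwards [eventually_nhdsWithin_of_eventually_nhds hC, self_mem_nhdsWithin]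
        with x hx hx0
      have hx0' : (0 : ℝ) < |x| ^ k := pow_pos (abs_pos.mpr hx0) k
      rw [norm_smul, norm_pow, Complex.norm_real, Real.norm_eq_abs, Real.norm_eq_abs,
        abs_pow, pow_succ] at hx
      calc ‖ps.coeff k‖ = (|x| ^ k * ‖ps.coeff k‖) / |x| ^ k := by field_simp
        _ ≤ (C * (|x| ^ k * |x|)) / |x| ^ k := by gcongr
        _ = C * |x| := by field_simp
    have hlim : Tendsto (fun x : ℝ => C * |x|) (nhdsWithin 0 {0}ᶜ) (nhds 0) := by
      have : Tendsto (fun x : ℝ => C * |x|) (nhds 0) (nhds (C * |(0:ℝ)|)) :=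
        (continuous_const.mul continuous_abs).tendsto 0
      simpa using this.mono_left nhdsWithin_le_nhds
    have : ‖ps.coeff k‖ ≤ 0 := ge_of_tendsto hlim hev
    simpa using le_antisymm this (norm_nonneg _)


/-- If `r(x) = p(x)/p(-x)` approximates `e^x` to order `n` at `0`, then the real and
imaginary parts of `r(ix)` approximate `cos x` and `sin x` to order `n`. -/
theorem pade_cos_sin_order (p : Polynomial ℝ) (n : ℕ) (hp0 : p.eval 0 ≠ 0)
    (h : (fun x : ℝ => p.eval x - Real.exp x * p.eval (-x)) =O[nhds 0]
      fun x : ℝ => x ^ (n + 1)) :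
    ((fun x : ℝ =>
        (((p.map (algebraMap ℝ ℂ)).eval (Complex.I * x) /
            (p.map (algebraMap ℝ ℂ)).eval (-(Complex.I * x))).re - Real.cos x))
      =O[nhds 0] (fun x : ℝ => x ^ (n + 1))) ∧
    ((fun x : ℝ =>
        (((p.map (algebraMap ℝ ℂ)).eval (Complex.I * x) /
            (p.map (algebraMap ℝ ℂ)).eval (-(Complex.I * x))).im - Real.sin x))
      =O[nhds 0] (fun x : ℝ => x ^ (n + 1))) := by
  set q := p.map (algebraMap ℝ ℂ) with hq
  set F : ℂ → ℂ := fun z => q.eval z - Complex.exp z * q.eval (-z) with hF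
  have hqx : ∀ x : ℝ, q.eval (x : ℂ) = ((p.eval x : ℝ) : ℂ) := by
    intro x
    rw [hq, Polynomial.eval_map]
    exact Polynomial.eval₂_at_apply (algebraMap ℝ ℂ) x
  have hFa : AnalyticAt ℂ F 0 := by
    refine AnalyticAt.sub ?_ (analyticAt_cexp.mul ?_)
    · exact (AnalyticOnNhd.eval_polynomial q) 0 (Set.mem_univ _)
    · exact ((AnalyticOnNhd.eval_polynomial q) (-(0:ℂ)) (Set.mem_univ _)).comp analyticAt_id.neg
  obtain ⟨ps, hps⟩ := hFa
  have hreal : (fun x : ℝ => F x) =O[nhds 0] fun x : ℝ => x ^ (n + 1) := by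
    have heq : (fun x : ℝ => F x)
        = fun x : ℝ => ((p.eval x - Real.exp x * p.eval (-x) : ℝ) : ℂ) := by
      funext x
      rw [hF]
      have : (-(x : ℂ)) = ((-x : ℝ) : ℂ) := by push_cast; ring
      simp only [this, hqx, Complex.ofReal_sub, Complex.ofReal_mul, Complex.ofReal_exp]
    rw [heq]
    exact (Complex.ofRealCLM.isBigO_comp _ _).trans h
  have hcoeff : ∀ k ≤ n, ps.coeff k = 0 := coeff_vanish_of_isBigO_real hps hreal
  have psum0 : ps.partialSum (n + 1) = fun _ : ℂ => 0 := by
    funext z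
    refine Finset.sum_eq_zero fun k hk => ?_
    rw [ps.apply_eq_pow_smul_coeff, hcoeff k (Nat.lt_succ_iff.mp (Finset.mem_range.mp hk)),
      smul_zero]
  have hO : F =O[nhds 0] fun z : ℂ => ‖z‖ ^ (n + 1) := by
    have := hps.isBigO_sub_partialSum_pow (n + 1)
    simpa [psum0] using this
  have hIc : Continuous fun x : ℝ => Complex.I * (x : ℂ) :=
    continuous_const.mul Complex.continuous_ofReal
  have hI : Tendsto (fun x : ℝ => Complex.I * x) (nhds 0) (nhds 0) := by
    have := hIc.tendsto 0
    simpa using this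
  have hOI : (fun x : ℝ => F (Complex.I * x)) =O[nhds 0] fun x : ℝ => x ^ (n + 1) := by
    refine (hO.comp_tendsto hI).trans (isBigO_of_le _ fun x => ?_)
    simp [abs_pow]
  have hden : Tendsto (fun x : ℝ => q.eval (-(Complex.I * x))) (nhds 0)
      (nhds (q.eval 0)) := by
    have hc : Continuous fun x : ℝ => q.eval (-(Complex.I * x)) :=
      (Polynomial.continuous q).comp hIc.neg
    have := hc.tendsto 0
    simpa using this
  have hne : q.eval 0 ≠ 0 := by
    have : q.eval ((0 : ℝ) : ℂ) = ((p.eval 0 : ℝ) : ℂ) := hqx 0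
    simp only [Complex.ofReal_zero] at this
    rw [this]
    exact_mod_cast hp0
  have hne_ev : ∀ᶠ x : ℝ in nhds 0, q.eval (-(Complex.I * x)) ≠ 0 := hden.eventually_ne hne
  have hinv : Tendsto (fun x : ℝ => (q.eval (-(Complex.I * x)))⁻¹) (nhds 0)
      (nhds (q.eval 0)⁻¹) := hden.inv₀ hne
  have hg : (fun x : ℝ => q.eval (Complex.I * x) / q.eval (-(Complex.I * x))
        - Complex.exp (Complex.I * x))
      =O[nhds 0] fun x : ℝ => x ^ (n + 1) := by
    have hmul : (fun x : ℝ => F (Complex.I * x) * (q.eval (-(Complex.I * x)))⁻¹)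
        =O[nhds 0] fun x : ℝ => x ^ (n + 1) := by
      have := hOI.mul (hinv.isBigO_one ℝ)
      simpa using this
    refine hmul.congr' ?_ EventuallyEq.rfl
    filter_upwards [hne_ev] with x hx
    rw [hF]
    field_simp
  have hexp_re : ∀ x : ℝ, (Complex.exp (Complex.I * x)).re = Real.cos x := by
    intro x
    rw [mul_comm, Complex.exp_mul_I]
    simp [Complex.cos_ofReal_re]
  have hexp_im : ∀ x : ℝ, (Complex.exp (Complex.I * x)).im = Real.sin x := by
    intro x
    rw [mul_comm, Complex.exp_mul_I]
    simp [Complex.sin_ofReal_re]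
  constructor
  · have heq : (fun x : ℝ => ((q.eval (Complex.I * x) / q.eval (-(Complex.I * x))).re
        - Real.cos x))
        = fun x : ℝ => (q.eval (Complex.I * x) / q.eval (-(Complex.I * x))
          - Complex.exp (Complex.I * x)).re := by
      funext x
      rw [Complex.sub_re, hexp_re]
    rw [heq]
    refine (isBigO_of_le _ fun x => ?_).trans hg
    rw [Real.norm_eq_abs]
    exact Complex.abs_re_le_norm _
  · have heq : (fun x : ℝ => ((q.eval (Complex.I * x) / q.eval (-(Complex.I * x))).im
        - Real.sin x))
        = fun x : ℝ => (q.eval (Complex.I * x) / q.eval (-(Complex.I * x))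
          - Complex.exp (Complex.I * x)).im := by
      funext x
      rw [Complex.sub_im, hexp_im]
    rw [heq]
    refine (isBigO_of_le _ fun x => ?_).trans hg
    rw [Real.norm_eq_abs]
    exact Complex.abs_im_le_norm _
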